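/- For every positive integer n, every real ε > 0, and every real s with s ≥ √(ln(2n(1 + 1/ε))/π), one has ∑_{x ∈ ℤⁿ, x ≠ 0} exp(−π s² ‖x‖²) ≤ ε. -/

import Mathlib

open Real ENNReal

/-- Factorization of a product-form sum over `Fin n → ℤ` in `ℝ≥0∞`. -/
lemma tsum_pi_prod_pow (η : ℝ≥0∞) :
    ∀ n : ℕ, ∑' x : Fin n → ℤ, ∏ i, η ^ (x i).natAbs
      = (∑' k : ℤ, η ^ k.natAbs) ^ n := by
  intro n
  induction n with
  | zero =>
      rw [pow_zero]
      have h : (fun x : Fin 0 → ℤ => ∏ i, η ^ (x i).natAbs) = fun _ => 1 := by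
        funext x; simp
      rw [h]
      exact tsum_eq_single (fun i => (0 : ℤ)) (fun b hb => absurd (Subsingleton.elim b _) hb)
  | succ n ih =>
      have e := (Fin.consEquiv (fun _ : Fin (n+1) => ℤ))
      calc ∑' x : Fin (n+1) → ℤ, ∏ i, η ^ (x i).natAbs
          = ∑' p : ℤ × (Fin n → ℤ), ∏ i, η ^ (((Fin.consEquiv (fun _ : Fin (n+1) => ℤ)) p) i).natAbs :=
            ((Fin.consEquiv (fun _ : Fin (n+1) => ℤ)).tsum_eq
              (fun x : Fin (n+1) → ℤ => ∏ i, η ^ (x i).natAbs)).symm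
        _ = ∑' p : ℤ × (Fin n → ℤ), η ^ p.1.natAbs * ∏ i, η ^ (p.2 i).natAbs := by
            congr 1; funext p
            rw [Fin.prod_univ_succ]
            simp [Fin.consEquiv]
        _ = ∑' a : ℤ, ∑' b : Fin n → ℤ, η ^ a.natAbs * ∏ i, η ^ (b i).natAbs := by
            rw [ENNReal.tsum_prod']
        _ = ∑' a : ℤ, η ^ a.natAbs * ∑' b : Fin n → ℤ, ∏ i, η ^ (b i).natAbs := by
            congr 1; funext a; rw [ENNReal.tsum_mul_left]
        _ = (∑' k : ℤ, η ^ k.natAbs) ^ (n + 1) := by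
            rw [ih, ENNReal.tsum_mul_right, pow_succ, mul_comm]

/-- The 1-D sum: geometric series over `ℤ`. -/
lemma tsum_int_pow_natAbs {η : ℝ≥0∞} :
    ∑' k : ℤ, η ^ k.natAbs = (1 - η)⁻¹ + η * (1 - η)⁻¹ := by
  have h : (fun k : ℤ => η ^ k.natAbs)
      = Int.rec (fun m : ℕ => η ^ m) (fun m : ℕ => η ^ (m + 1)) := by
    funext k; cases k <;> rfl
  rw [h, tsum_int_rec ENNReal.summable ENNReal.summable, ENNReal.tsum_geometric,
    ENNReal.tsum_geometric_add_one]

/-- Key real inequality via Bernoulli. -/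
lemma key_pow_le (n : ℕ) (hn : 1 ≤ (n : ℝ)) {ε δ : ℝ} (hε : 0 < ε) (hδ0 : 0 < δ)
    (hδ : δ * (2 * n * (1 + ε)) ≤ ε) : ((1 + δ) / (1 - δ)) ^ n ≤ 1 + ε := by
  have hb2 : 2 * n * δ * (1 + ε) ≤ ε := by nlinarith
  have hb3 : 2 * n * δ < 1 := by nlinarith
  have hδ1 : δ < 1 := by nlinarith
  set u : ℝ := (1 - δ) / (1 + δ) with hu
  have hδp : (0:ℝ) < 1 + δ := by linarith
  have hu0 : 0 < u := div_pos (by linarith) hδp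
  have hber : 1 + (n : ℝ) * (u - 1) ≤ u ^ n := by
    have := one_add_mul_le_pow (a := u - 1) (by nlinarith [div_nonneg (by linarith : (0:ℝ) ≤ 1 - δ) hδp.le]) n
    simpa using this
  have hval : 1 + (n : ℝ) * (u - 1) = 1 - 2 * n * δ / (1 + δ) := by
    rw [hu]; field_simp; ring
  have hbpos : 0 < 1 - 2 * n * δ / (1 + δ) := by
    have : 2 * n * δ / (1 + δ) ≤ 2 * n * δ := by
      apply div_le_self (by positivity); linarith
    linarith
  have hun : 0 < u ^ n := pow_pos hu0 n
  have h1 : ((1 + δ) / (1 - δ)) ^ n = (u ^ n)⁻¹ := by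
    rw [← inv_pow, hu, inv_div]
  rw [h1]
  have h2 : (u ^ n)⁻¹ ≤ (1 - 2 * n * δ / (1 + δ))⁻¹ := by
    apply inv_anti₀ hbpos
    rw [← hval]; exact hber
  refine h2.trans ?_
  have h3 : 1 / (1 + ε) ≤ 1 - 2 * n * δ / (1 + δ) := by
    rw [div_le_iff₀ (by linarith : (0:ℝ) < 1 + ε)]
    have hd : 2 * n * δ / (1 + δ) * (1 + ε) ≤ ε := by
      have h4 : 2 * n * δ / (1 + δ) ≤ 2 * n * δ := by
        apply div_le_self (by positivity); linarith
      nlinarith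
    nlinarith
  calc (1 - 2 * n * δ / (1 + δ))⁻¹ ≤ (1 / (1 + ε))⁻¹ :=
        inv_anti₀ (by positivity) h3
    _ = 1 + ε := by rw [one_div, inv_inv]

/-- For every positive integer `n`, every real `ε > 0`, and every real
`s ≥ √(ln(2n(1 + 1/ε))/π)`, the Gaussian mass of the nonzero integer vectors satisfies
`∑_{x ∈ ℤⁿ, x ≠ 0} exp(−π s² ‖x‖²) ≤ ε`. -/
theorem smoothing_parameter_bound (n : ℕ) (hn : 0 < n) (ε : ℝ) (hε : 0 < ε) (s : ℝ)
    (hs : s ≥ Real.sqrt (Real.log (2 * n * (1 + 1 / ε)) / Real.pi)) :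
    ∑' x : {x : Fin n → ℤ // x ≠ 0},
      Real.exp (-Real.pi * s ^ 2 * ∑ i, ((x.1 i : ℝ)) ^ 2) ≤ ε := by
  have hπ : (0:ℝ) < Real.pi := Real.pi_pos
  have hn1 : (1:ℝ) ≤ (n:ℝ) := by exact_mod_cast hn
  set c : ℝ := 2 * n * (1 + 1 / ε) with hc
  have hεinv : (0:ℝ) < 1 / ε := by positivity
  have hc1 : (1:ℝ) < c := by rw [hc]; nlinarith
  have hc0 : (0:ℝ) < c := by linarith
  set δ : ℝ := Real.exp (-(Real.pi * s ^ 2)) with hδdef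
  have hδ0 : 0 < δ := Real.exp_pos _
  -- `δ ≤ 1/c`
  have hs2 : Real.log c / Real.pi ≤ s ^ 2 := by
    have h0 : 0 ≤ Real.log c / Real.pi := div_nonneg (Real.log_nonneg hc1.le) hπ.le
    have := pow_le_pow_left₀ (Real.sqrt_nonneg _) hs 2
    rwa [Real.sq_sqrt h0] at this
  have hlog : Real.log c ≤ Real.pi * s ^ 2 := by
    rw [div_le_iff₀ hπ] at hs2; linarith
  have hδc : δ ≤ c⁻¹ := by
    rw [hδdef, ← Real.exp_log hc0, ← Real.exp_neg, Real.exp_le_exp]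
    linarith
  have hkey : δ * (2 * n * (1 + ε)) ≤ ε := by
    have h1 : c⁻¹ * (2 * n * (1 + ε)) = ε := by
      rw [inv_mul_eq_div, div_eq_iff hc0.ne', hc]
      field_simp
      ring
    calc δ * (2 * n * (1 + ε)) ≤ c⁻¹ * (2 * n * (1 + ε)) := by
          apply mul_le_mul_of_nonneg_right hδc (by positivity)
      _ = ε := h1
  have hδ1 : δ < 1 := by
    have hcinv : c⁻¹ < 1 := by
      rw [inv_lt_one_iff₀]; right; exact hc1
    linarith
  -- pointwise bound
  have hterm : ∀ x : Fin n → ℤ,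
      Real.exp (-Real.pi * s ^ 2 * ∑ i, ((x i : ℝ)) ^ 2) ≤ ∏ i, δ ^ (x i).natAbs := by
    intro x
    have h1 : -Real.pi * s ^ 2 * ∑ i, ((x i : ℝ)) ^ 2
        = ∑ i, (-(Real.pi * s ^ 2) * ((x i : ℝ)) ^ 2) := by
      rw [Finset.mul_sum]; congr 1; funext i; ring
    rw [h1, Real.exp_sum]
    apply Finset.prod_le_prod (fun i _ => (Real.exp_pos _).le) (fun i _ => ?_)
    set k := x i
    have hk2 : ((k.natAbs : ℝ)) ≤ ((k : ℝ)) ^ 2 := by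
      have h3 : ((k : ℝ)) ^ 2 = ((k.natAbs : ℝ)) ^ 2 := by
        rw [Nat.cast_natAbs]; push_cast; rw [sq_abs]
      rw [h3]
      exact_mod_cast Nat.le_self_pow two_ne_zero k.natAbs
    have h4 : δ ^ k.natAbs = Real.exp ((k.natAbs : ℝ) * (-(Real.pi * s ^ 2))) := by
      rw [Real.exp_nat_mul]
    rw [h4, Real.exp_le_exp]
    have hps : 0 ≤ Real.pi * s ^ 2 := by positivity
    nlinarith
  -- move to ℝ≥0∞
  set η : ℝ≥0∞ := ENNReal.ofReal δ with hηdef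
  set Θ : ℝ≥0∞ := ∑' k : ℤ, η ^ k.natAbs with hΘdef
  set θ : ℝ := (1 + δ) / (1 - δ) with hθdef
  have h1δ : (0:ℝ) < 1 - δ := by linarith
  have hθ0 : 0 ≤ θ := by positivity
  have hΘval : Θ = ENNReal.ofReal θ := by
    rw [hΘdef, tsum_int_pow_natAbs, hηdef]
    have h5 : (1:ℝ≥0∞) - ENNReal.ofReal δ = ENNReal.ofReal (1 - δ) := by
      rw [ENNReal.ofReal_sub 1 hδ0.le, ENNReal.ofReal_one]
    rw [h5, ← ENNReal.ofReal_inv_of_pos h1δ, ← ENNReal.ofReal_mul hδ0.le,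
      ← ENNReal.ofReal_add (by positivity) (by positivity)]
    congr 1
    rw [hθdef]; field_simp
  have hP0 : (∏ i : Fin n, η ^ ((0 : Fin n → ℤ) i).natAbs) = 1 := by simp
  -- the subtype sum in ℝ≥0∞
  have hsub : (∑' x : {x : Fin n → ℤ // x ≠ 0},
      ENNReal.ofReal (Real.exp (-Real.pi * s ^ 2 * ∑ i, ((x.1 i : ℝ)) ^ 2)))
      ≤ ENNReal.ofReal ε := by
    have step1 : (∑' x : {x : Fin n → ℤ // x ≠ 0},
        ENNReal.ofReal (Real.exp (-Real.pi * s ^ 2 * ∑ i, ((x.1 i : ℝ)) ^ 2)))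
        ≤ ∑' x : {x : Fin n → ℤ // x ≠ 0}, ∏ i, η ^ (x.1 i).natAbs := by
      apply ENNReal.tsum_le_tsum
      intro x
      calc ENNReal.ofReal (Real.exp (-Real.pi * s ^ 2 * ∑ i, ((x.1 i : ℝ)) ^ 2))
          ≤ ENNReal.ofReal (∏ i, δ ^ (x.1 i).natAbs) :=
            ENNReal.ofReal_le_ofReal (hterm x.1)
        _ = ∏ i, η ^ (x.1 i).natAbs := by
            rw [ENNReal.ofReal_prod_of_nonneg (fun i _ => by positivity)]
            congr 1; funext i; rw [ENNReal.ofReal_pow hδ0.le]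
    have step2 : (∑' x : {x : Fin n → ℤ // x ≠ 0}, ∏ i, η ^ (x.1 i).natAbs)
        ≤ ∑' x : Fin n → ℤ, if x = 0 then 0 else ∏ i, η ^ (x i).natAbs := by
      apply ENNReal.summable.tsum_le_tsum_of_inj (Subtype.val) Subtype.val_injective
        (fun _ _ => zero_le) (fun x => ?_) ENNReal.summable
      rw [if_neg x.2]
    have step3 : (∑' x : Fin n → ℤ, ∏ i, η ^ (x i).natAbs)
        = 1 + ∑' x : Fin n → ℤ, (if x = 0 then 0 else ∏ i, η ^ (x i).natAbs) := by
      rw [ENNReal.tsum_eq_add_tsum_ite (0 : Fin n → ℤ), hP0]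
      congr 1
      apply tsum_congr
      intro x
      split_ifs <;> rfl
    have step4 : Θ ^ n ≤ 1 + ENNReal.ofReal ε := by
      rw [hΘval, ← ENNReal.ofReal_pow hθ0]
      calc ENNReal.ofReal (θ ^ n) ≤ ENNReal.ofReal (1 + ε) :=
            ENNReal.ofReal_le_ofReal (key_pow_le n hn1 hε hδ0 hkey)
        _ = 1 + ENNReal.ofReal ε := by
            rw [ENNReal.ofReal_add zero_le_one hε.le, ENNReal.ofReal_one]
    have : (1 : ℝ≥0∞) + ∑' x : {x : Fin n → ℤ // x ≠ 0},
        ENNReal.ofReal (Real.exp (-Real.pi * s ^ 2 * ∑ i, ((x.1 i : ℝ)) ^ 2))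
        ≤ 1 + ENNReal.ofReal ε := by
      calc (1 : ℝ≥0∞) + _ ≤ 1 + ∑' x : Fin n → ℤ, if x = 0 then 0
              else ∏ i, η ^ (x i).natAbs :=
            add_le_add_right (step1.trans step2) 1
        _ = ∑' x : Fin n → ℤ, ∏ i, η ^ (x i).natAbs := step3.symm
        _ = Θ ^ n := by rw [tsum_pi_prod_pow η n, ← hΘdef]
        _ ≤ 1 + ENNReal.ofReal ε := step4
    exact (ENNReal.add_le_add_iff_left ENNReal.one_ne_top).mp this
  -- back to ℝ
  calc ∑' x : {x : Fin n → ℤ // x ≠ 0},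
        Real.exp (-Real.pi * s ^ 2 * ∑ i, ((x.1 i : ℝ)) ^ 2)
      = ∑' x : {x : Fin n → ℤ // x ≠ 0},
        (ENNReal.ofReal (Real.exp (-Real.pi * s ^ 2 * ∑ i, ((x.1 i : ℝ)) ^ 2))).toReal := by
        congr 1; funext x; rw [ENNReal.toReal_ofReal (Real.exp_nonneg _)]
    _ = (∑' x : {x : Fin n → ℤ // x ≠ 0},
        ENNReal.ofReal (Real.exp (-Real.pi * s ^ 2 * ∑ i, ((x.1 i : ℝ)) ^ 2))).toReal :=
        (ENNReal.tsum_toReal_eq (fun a => ENNReal.ofReal_ne_top)).symm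
    _ ≤ (ENNReal.ofReal ε).toReal := ENNReal.toReal_mono ENNReal.ofReal_ne_top hsub
    _ = ε := ENNReal.toReal_ofReal hε.le
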